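/- Let d ≥ 2 and 1 ≤ k ≤ d be integers and set g(n) = ∏_{j=d-k+1}^{d}(n+j) + ∏_{j=0}^{k-1}(n-j) (i.e., the case m = 1). Then every complex root α of g satisfies Re(α) = (-d+k-1)/2. -/

import Mathlib

open Finset

lemma abs_sub_lt_of_re_gt (z : ℂ) (s t : ℝ) (hst : s < t) (hz : s + t < 2 * z.re) :
    ‖z - t‖ < ‖z - s‖ := by
  have h1 : Complex.normSq (z - t) < Complex.normSq (z - s) := by
    simp only [Complex.normSq_apply, Complex.sub_re, Complex.sub_im, Complex.ofReal_re,
      Complex.ofReal_im]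
    nlinarith
  have := Real.sqrt_lt_sqrt (Complex.normSq_nonneg _) h1
  simpa [Complex.norm_def] using this

lemma prod_abs_lt {s : Finset ℕ} (hs : s.Nonempty) (f g : ℕ → ℂ)
    (h : ∀ i ∈ s, ‖f i‖ < ‖g i‖) :
    ∏ i ∈ s, ‖f i‖ < ∏ i ∈ s, ‖g i‖ := by
  by_cases hz : ∃ i ∈ s, f i = 0
  · obtain ⟨i, hi, h0⟩ := hz
    rw [Finset.prod_eq_zero hi (by simp [h0])]
    exact Finset.prod_pos fun j hj => (norm_nonneg _).trans_lt (h j hj)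
  · push_neg at hz
    exact Finset.prod_lt_prod_of_nonempty
      (fun i hi => norm_pos_iff.mpr (hz i hi)) h hs

theorem stmt_8 (d k : ℕ) (hd : 2 ≤ d) (hk1 : 1 ≤ k) (hkd : k ≤ d) :
    ∀ α : ℂ,
      (∏ j ∈ Finset.Icc (d - k + 1) d, (α + (j : ℂ)))
          + (∏ j ∈ Finset.range k, (α - (j : ℂ))) = 0 →
        α.re = (-(d : ℝ) + k - 1) / 2 := by
  intro α hα
  set a := d - k + 1 with ha
  have hak : a + k = d + 1 := by omega
  have hre : ∏ j ∈ Finset.Icc a d, (α + (j : ℂ))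
      = ∏ i ∈ Finset.range k, (α + ((a + i : ℕ) : ℂ)) := by
    rw [← Finset.Ico_add_one_right_eq_Icc, Finset.prod_Ico_eq_prod_range]
    have h : d + 1 - a = k := by omega
    rw [h]
  have habs : ∏ i ∈ Finset.range k, ‖α + ((a + i : ℕ) : ℂ)‖
      = ∏ i ∈ Finset.range k, ‖α - (i : ℂ)‖ := by
    have h2 : ∏ i ∈ Finset.range k, (α + ((a + i : ℕ) : ℂ))
        = -(∏ j ∈ Finset.range k, (α - (j : ℂ))) := by
      rw [← hre]; linear_combination hα
    calc ∏ i ∈ Finset.range k, ‖α + ((a + i : ℕ) : ℂ)‖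
        = ‖∏ i ∈ Finset.range k, (α + ((a + i : ℕ) : ℂ))‖ := (norm_prod _ _).symm
      _ = ‖∏ j ∈ Finset.range k, (α - (j : ℂ))‖ := by rw [h2, norm_neg]
      _ = ∏ i ∈ Finset.range k, ‖α - (i : ℂ)‖ := norm_prod _ _
  have hcast : ((a : ℝ)) = (d : ℝ) - k + 1 := by
    have : ((a : ℝ)) = ((d - k : ℕ) : ℝ) + 1 := by push_cast [ha]; ring
    rw [this, Nat.cast_sub hkd]
  by_contra hne
  have hns : (Finset.range k).Nonempty := Finset.nonempty_range_iff.mpr (by omega)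
  rcases lt_or_gt_of_ne hne with hlt | hgt
  · -- α.re < c : each |α + (a+i)| < |α - i|
    have key : ∀ i ∈ Finset.range k,
        ‖α + ((a + i : ℕ) : ℂ)‖ < ‖α - (i : ℂ)‖ := by
      intro i hi
      have := abs_sub_lt_of_re_gt (-α) (-(i : ℝ)) ((a + i : ℕ) : ℝ)
        (by
          have h1 : (1:ℝ) ≤ (a:ℝ) := by exact_mod_cast (by omega : 1 ≤ a)
          have h2 : (0:ℝ) ≤ (i:ℝ) := Nat.cast_nonneg i
          push_cast; nlinarith)
        (by
          simp only [Complex.neg_re]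
          push_cast [hcast] at hlt ⊢
          nlinarith)
      calc ‖α + ((a + i : ℕ) : ℂ)‖
          = ‖-α - (((a + i : ℕ) : ℝ) : ℂ)‖ := by
            rw [← norm_neg]; push_cast; ring_nf
        _ < ‖-α - ((-(i : ℝ) : ℝ) : ℂ)‖ := this
        _ = ‖α - (i : ℂ)‖ := by
            rw [← norm_neg]; push_cast; ring_nf
    exact absurd habs (ne_of_lt (prod_abs_lt hns (fun i => α + ((a + i : ℕ) : ℂ)) (fun i => α - (i : ℂ)) key))
  · have key : ∀ i ∈ Finset.range k,
        ‖α - (i : ℂ)‖ < ‖α + ((a + i : ℕ) : ℂ)‖ := by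
      intro i hi
      have := abs_sub_lt_of_re_gt α (-((a + i : ℕ) : ℝ)) ((i : ℕ) : ℝ)
        (by
          have h1 : (1:ℝ) ≤ (a:ℝ) := by exact_mod_cast (by omega : 1 ≤ a)
          have h2 : (0:ℝ) ≤ (i:ℝ) := Nat.cast_nonneg i
          push_cast; nlinarith)
        (by
          push_cast [hcast] at hgt ⊢
          nlinarith)
      calc ‖α - (i : ℂ)‖
          = ‖α - (((i : ℕ) : ℝ) : ℂ)‖ := by push_cast; ring_nf
        _ < ‖α - ((-((a + i : ℕ) : ℝ) : ℝ) : ℂ)‖ := this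
        _ = ‖α + ((a + i : ℕ) : ℂ)‖ := by push_cast; ring_nf
    exact absurd habs.symm (ne_of_lt (prod_abs_lt hns (fun i => α - (i : ℂ)) (fun i => α + ((a + i : ℕ) : ℂ)) key))
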